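/- If every component of a graph G is a subdivision of a graph on at most n vertices, then G has no K_{1,n^2}-minor. -/

import Mathlib

open SimpleGraph

/-- `H` is a minor of `G`. -/
def IsMinor {V W : Type*} (G : SimpleGraph V) (H : SimpleGraph W) : Prop :=
  ∃ f : W → Set V,
    (∀ w, (f w).Nonempty) ∧
    (∀ w, (G.induce (f w)).Connected) ∧
    (∀ w₁ w₂, w₁ ≠ w₂ → Disjoint (f w₁) (f w₂)) ∧
    (∀ w₁ w₂, H.Adj w₁ w₂ → ∃ v₁ ∈ f w₁, ∃ v₂ ∈ f w₂, G.Adj v₁ v₂)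

/-- `G` is a subdivision of `H`: branch vertices are given by an injection `f`,
and each edge of `H` is replaced by a path of `G`; these paths are internally
disjoint from each other and from the branch vertices, and they cover `G`. -/
def IsSubdivisionOf {V W : Type*} (G : SimpleGraph V) (H : SimpleGraph W) : Prop :=
  ∃ (f : W → V) (P : ∀ ⦃a b : W⦄, H.Adj a b → G.Walk (f a) (f b)),
    Function.Injective f ∧
    (∀ ⦃a b⦄ (h : H.Adj a b), (P h).IsPath) ∧
    (∀ ⦃a b⦄ (h : H.Adj a b), P h.symm = (P h).reverse) ∧
    (∀ ⦃a b⦄ (h : H.Adj a b), ∀ w : W, f w ∈ (P h).support → w = a ∨ w = b) ∧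
    (∀ ⦃a b⦄ (h : H.Adj a b), ∀ ⦃c d⦄ (h' : H.Adj c d), s(a, b) ≠ s(c, d) →
      ∀ v, v ∈ (P h).support → v ∈ (P h').support →
        (v = f a ∨ v = f b) ∧ (v = f c ∨ v = f d)) ∧
    (∀ v : V, (∃ w, f w = v) ∨ ∃ (a b : _) (h : H.Adj a b), v ∈ (P h).support) ∧
    (∀ e : Sym2 V, e ∈ G.edgeSet ↔ ∃ (a b : _) (h : H.Adj a b), e ∈ (P h).edges)

namespace StarMinorAux

lemma getVert_eq_support_getElem {V : Type*} {Γ : SimpleGraph V} {x y : V} (p : Γ.Walk x y)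
    {i : ℕ} (hi : i ≤ p.length) :
    p.getVert i = p.support[i]'(by rw [SimpleGraph.Walk.length_support]; omega) := by
  induction p generalizing i with
  | nil =>
    simp only [SimpleGraph.Walk.length_nil, Nat.le_zero] at hi
    subst hi
    simp [SimpleGraph.Walk.getVert]
  | cons h q ih =>
    cases i with
    | zero => simp [SimpleGraph.Walk.getVert]
    | succ i =>
      simp only [SimpleGraph.Walk.getVert_cons_succ, SimpleGraph.Walk.support_cons,
        List.getElem_cons_succ]
      exact ih (by simpa using hi)

lemma getVert_inj' {V : Type*} {Γ : SimpleGraph V} {x y : V} {p : Γ.Walk x y} (hp : p.IsPath)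
    {i j : ℕ} (hi : i ≤ p.length) (hj : j ≤ p.length)
    (hij : p.getVert i = p.getVert j) : i = j := by
  rw [getVert_eq_support_getElem p hi, getVert_eq_support_getElem p hj] at hij
  exact (hp.support_nodup.getElem_inj_iff).mp hij

lemma exists_getVert_of_mem_edges {V : Type*} {Γ : SimpleGraph V} {x y : V} {p : Γ.Walk x y}
    {e : Sym2 V} (he : e ∈ p.edges) :
    ∃ i, i < p.length ∧ e = s(p.getVert i, p.getVert (i + 1)) := by
  induction p with
  | nil => simp at he
  | cons h q ih =>
    rw [SimpleGraph.Walk.edges_cons, List.mem_cons] at he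
    rcases he with rfl | he
    · exact ⟨0, by simp, by rw [SimpleGraph.Walk.getVert_zero, SimpleGraph.Walk.getVert_cons_succ,
        SimpleGraph.Walk.getVert_zero]⟩
    · obtain ⟨i, hi, hei⟩ := ih he
      exact ⟨i + 1, by simp; omega, by rwa [SimpleGraph.Walk.getVert_cons_succ,
        SimpleGraph.Walk.getVert_cons_succ]⟩

lemma sort3 {a b c : ℕ} (hab : a ≠ b) (hac : a ≠ c) (hbc : b ≠ c) (P : ℕ → Prop)
    (ha : P a) (hb : P b) (hc : P c) :
    ∃ u v w, u < v ∧ v < w ∧ P u ∧ P v ∧ P w := by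
  rcases lt_trichotomy a b with h1 | h1 | h1
  · rcases lt_trichotomy b c with h2 | h2 | h2
    · exact ⟨a, b, c, h1, h2, ha, hb, hc⟩
    · exact absurd h2 hbc
    · rcases lt_trichotomy a c with h3 | h3 | h3
      · exact ⟨a, c, b, h3, h2, ha, hc, hb⟩
      · exact absurd h3 hac
      · exact ⟨c, a, b, h3, h1, hc, ha, hb⟩
  · exact absurd h1 hab
  · rcases lt_trichotomy a c with h2 | h2 | h2
    · exact ⟨b, a, c, h1, h2, hb, ha, hc⟩
    · exact absurd h2 hac
    · rcases lt_trichotomy b c with h3 | h3 | h3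
      · exact ⟨b, c, a, h3, h2, hb, hc, ha⟩
      · exact absurd h3 hbc
      · exact ⟨c, b, a, h3, h1, hc, hb, ha⟩

lemma core {V : Type*} {Γ : SimpleGraph V} {x y : V} (p : Γ.Walk x y) (hp : p.IsPath)
    (S : Set V)
    (hconn : ∀ a ∈ S, ∀ b ∈ S, ∃ w : Γ.Walk a b, ∀ z ∈ w.support, z ∈ S)
    (hint : ∀ i, 0 < i → i < p.length → ∀ z, Γ.Adj (p.getVert i) z →
      s(p.getVert i, z) ∈ p.edges)
    (u v w : ℕ) (huv : u < v) (hvw : v < w) (hw : w < p.length)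
    (hCu : (p.getVert u ∈ S ∧ p.getVert (u+1) ∉ S) ∨ (p.getVert u ∉ S ∧ p.getVert (u+1) ∈ S))
    (hCv : (p.getVert v ∈ S ∧ p.getVert (v+1) ∉ S) ∨ (p.getVert v ∉ S ∧ p.getVert (v+1) ∈ S))
    (hCw : (p.getVert w ∈ S ∧ p.getVert (w+1) ∉ S) ∨ (p.getVert w ∉ S ∧ p.getVert (w+1) ∈ S)) :
    False := by
  classical
  set k := p.length with hk
  set g := p.getVert with hg
  set t : ℕ := if g v ∈ S then v else v + 1 with ht
  have ht1 : 1 ≤ t := by rw [ht]; split <;> omega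
  have hvt : v ≤ t := by rw [ht]; split <;> omega
  have htv : t ≤ v + 1 := by rw [ht]; split <;> omega
  have htk : t + 1 ≤ k := by
    rw [ht]; split
    · omega
    · omega
  have htS : g t ∈ S := by
    rw [ht]; split
    · assumption
    · rcases hCv with ⟨h1, h2⟩ | ⟨h1, h2⟩ <;> first | exact h2 | exact absurd h1 (by assumption)
  have hPr : ∃ d, k ≤ t + d + 1 ∨ g (t + d + 1) ∉ S := ⟨k, Or.inl (by omega)⟩
  set dr : ℕ := Nat.find hPr with hdr
  set r : ℕ := t + dr with hrdef
  have hrun_right : ∀ d ≤ dr, g (t + d) ∈ S := by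
    intro d hd
    induction d with
    | zero => simpa using htS
    | succ d ih =>
      have hnot := Nat.find_min hPr (show d < dr by omega)
      push_neg at hnot
      exact (show g (t + d + 1) ∈ S from hnot.2)
  have hrk : r < k := by
    rcases Nat.eq_zero_or_pos dr with h0 | h0
    · omega
    · have hnot := Nat.find_min hPr (show dr - 1 < dr by omega)
      push_neg at hnot
      have := hnot.1
      omega
  have hrspec := Nat.find_spec hPr
  have hrS : g (r + 1) ∉ S := by
    by_cases hgr : g (r + 1) ∈ S
    · exfalso
      have hle : k ≤ r + 1 := by
        rcases hrspec with hle | hns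
        · exact hle
        · exact absurd hgr hns
      have hwt : t ≤ w := by omega
      have h1 : g w ∈ S := by
        have := hrun_right (w - t) (by omega)
        rwa [show t + (w - t) = w by omega] at this
      have h2 : g (w + 1) ∈ S := by
        rcases lt_or_ge w r with hlt | hge
        · have := hrun_right (w + 1 - t) (by omega)
          rwa [show t + (w + 1 - t) = w + 1 by omega] at this
        · rwa [show w + 1 = r + 1 by omega]
      rcases hCw with ⟨_, hbad⟩ | ⟨hbad, _⟩ <;> exact hbad (by assumption)
    · exact hgr
  have hPl : ∃ d, t ≤ d ∨ g (t - d - 1) ∉ S := ⟨t, Or.inl le_rfl⟩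
  set dl : ℕ := Nat.find hPl with hdl
  set l : ℕ := t - dl with hldef
  have hrun_left : ∀ d ≤ dl, g (t - d) ∈ S := by
    intro d hd
    induction d with
    | zero => simpa using htS
    | succ d ih =>
      have hnot := Nat.find_min hPl (show d < dl by omega)
      push_neg at hnot
      have := hnot.2
      rwa [show t - d - 1 = t - (d + 1) by omega] at this
  have hdlt : dl ≤ t := by
    rcases Nat.eq_zero_or_pos dl with h0 | h0
    · omega
    · have hnot := Nat.find_min hPl (show dl - 1 < dl by omega)
      push_neg at hnot
      have := hnot.1
      omega
  have hlspec := Nat.find_spec hPl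
  have hl1 : 1 ≤ l ∧ g (l - 1) ∉ S := by
    rcases hlspec with hle | hns
    · exfalso
      have hdleq : dl = t := le_antisymm hdlt hle
      have h1 : g u ∈ S := by
        have := hrun_left (t - u) (by omega)
        rwa [show t - (t - u) = u by omega] at this
      have h2 : g (u + 1) ∈ S := by
        have := hrun_left (t - (u + 1)) (by omega)
        rwa [show t - (t - (u + 1)) = u + 1 by omega] at this
      rcases hCu with ⟨_, hbad⟩ | ⟨hbad, _⟩ <;> exact hbad (by assumption)
    · have hdlt' : dl < t := by
        by_contra hc
        push_neg at hc
        have h0 : g (t - dl) ∈ S := hrun_left dl le_rfl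
        rw [show t - dl = 0 by omega] at h0
        rw [show t - dl - 1 = 0 by omega] at hns
        exact hns h0
      exact ⟨by omega, by rwa [show l - 1 = t - dl - 1 by omega]⟩
  obtain ⟨hl1', hlS⟩ := hl1
  have hrun : ∀ j, l ≤ j → j ≤ r → g j ∈ S := by
    intro j hlj hjr
    rcases le_or_gt j t with hjt | hjt
    · have := hrun_left (t - j) (by omega)
      rwa [show t - (t - j) = j by omega] at this
    · have := hrun_right (j - t) (by omega)
      rwa [show t + (j - t) = j by omega] at this
  have hlt : l ≤ t := by omega
  have htr : t ≤ r := by omega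
  obtain ⟨q, hqS, hqk, hqout⟩ :
      ∃ q, g q ∈ S ∧ q ≤ k ∧ (q < l ∨ r < q) := by
    set su : ℕ := if g u ∈ S then u else u + 1 with hsu
    set sw : ℕ := if g w ∈ S then w else w + 1 with hsw
    have hsuS : g su ∈ S := by
      rw [hsu]; split
      · assumption
      · rcases hCu with ⟨h1, h2⟩ | ⟨h1, h2⟩ <;> first | exact h2 | exact absurd h1 (by assumption)
    have hswS : g sw ∈ S := by
      rw [hsw]; split
      · assumption
      · rcases hCw with ⟨h1, h2⟩ | ⟨h1, h2⟩ <;> first | exact h2 | exact absurd h1 (by assumption)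
    have hsuv : su ≤ v := by rw [hsu]; split <;> omega
    have hswv : v + 1 ≤ sw := by rw [hsw]; split <;> omega
    have hswk : sw ≤ k := by rw [hsw]; split <;> omega
    by_cases hin : l ≤ su ∧ sw ≤ r
    · exfalso
      have h1 : g v ∈ S := hrun v (by omega) (by omega)
      have h2 : g (v + 1) ∈ S := hrun (v + 1) (by omega) (by omega)
      rcases hCv with ⟨_, hbad⟩ | ⟨hbad, _⟩ <;> exact hbad (by assumption)
    · rcases not_and_or.mp hin with hno | hno
      · exact ⟨su, hsuS, by omega, Or.inl (by omega)⟩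
      · exact ⟨sw, hswS, by omega, Or.inr (by omega)⟩
  have hstay : ∀ (a b : V) (wk : Γ.Walk a b), (∀ z ∈ wk.support, z ∈ S) →
      ∀ j, l ≤ j → j ≤ r → a = g j → ∃ j', l ≤ j' ∧ j' ≤ r ∧ b = g j' := by
    intro a b wk
    induction wk with
    | nil => exact fun _ j h1 h2 h3 => ⟨j, h1, h2, h3⟩
    | @cons a c b hac wk ih =>
      intro hS j hlj hjr ha
      have hcS : c ∈ S := hS c (by
        rw [SimpleGraph.Walk.support_cons]
        exact List.mem_cons_of_mem _ wk.start_mem_support)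
      have hedge : s(g j, c) ∈ p.edges := hint j (by omega) (by omega) c (ha ▸ hac)
      obtain ⟨i, hik, hei⟩ := exists_getVert_of_mem_edges hedge
      have hnext : c = g (j + 1) ∨ c = g (j - 1) := by
        rcases Sym2.eq_iff.mp hei with ⟨h1, h2⟩ | ⟨h1, h2⟩
        · have : j = i := getVert_inj' hp (by omega) (by omega) h1
          exact Or.inl (by rw [this]; exact h2)
        · have : j = i + 1 := getVert_inj' hp (by omega) (by omega) h1
          exact Or.inr (by rw [this, Nat.add_sub_cancel]; exact h2)
      have hS' : ∀ z ∈ wk.support, z ∈ S := fun z hz =>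
        hS z (by simp [SimpleGraph.Walk.support_cons, hz])
      rcases hnext with hc | hc
      · rcases lt_or_ge j r with hjr' | hjr'
        · exact ih hS' (j + 1) (by omega) (by omega) hc
        · exact absurd (hc ▸ hcS) (by rw [show j + 1 = r + 1 by omega]; exact hrS)
      · rcases lt_or_ge l j with hlj' | hlj'
        · exact ih hS' (j - 1) (by omega) (by omega) hc
        · exact absurd (hc ▸ hcS) (by rw [show j - 1 = l - 1 by omega]; exact hlS)
  obtain ⟨wk, hwk⟩ := hconn (g t) htS (g q) hqS
  obtain ⟨j', hj1, hj2, hj3⟩ := hstay _ _ wk hwk t hlt htr rfl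
  have : q = j' := getVert_inj' hp (by omega) (by omega) hj3
  omega

end StarMinorAux

open StarMinorAux in
/-- If every component of `G` is a subdivision of a graph on at most `n` vertices,
then `G` has no `K_{1,n²}`-minor. -/
theorem no_large_star_minor_of_components_subdivisions {V : Type} [Fintype V]
    (G : SimpleGraph V) (n : ℕ)
    (h : ∀ c : G.ConnectedComponent, ∃ (m : ℕ) (H : SimpleGraph (Fin m)),
      m ≤ n ∧ IsSubdivisionOf (G.induce c.supp) H) :
    ¬ IsMinor G (completeBipartiteGraph (Fin 1) (Fin (n ^ 2))) := by
  rintro ⟨f, hne, hfconn, hfdisj, hfadj⟩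
  classical
  obtain ⟨c₀, hc₀⟩ := hne (Sum.inl 0)
  set C : Set V := f (Sum.inl 0) with hCdef
  set comp := G.connectedComponentMk c₀ with hcomp
  -- walks inside C
  have hwalk : ∀ a ∈ C, ∀ b ∈ C, ∃ w : G.Walk a b, ∀ z ∈ w.support, z ∈ C := by
    intro a ha b hb
    obtain ⟨w⟩ := (hfconn (Sum.inl 0)).preconnected ⟨a, ha⟩ ⟨b, hb⟩
    refine ⟨w.map (SimpleGraph.Embedding.induce C).toHom, ?_⟩
    intro z hz
    erw [SimpleGraph.Walk.support_map] at hz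
    obtain ⟨z', _, rfl⟩ := List.mem_map.mp hz
    exact z'.2
  have hCsupp : ∀ a ∈ C, a ∈ comp.supp := by
    intro a ha
    obtain ⟨w, _⟩ := hwalk c₀ hc₀ a ha
    rw [SimpleGraph.ConnectedComponent.mem_supp_iff, hcomp]
    exact (SimpleGraph.ConnectedComponent.eq).mpr ⟨w.reverse⟩
  obtain ⟨m, H, hm, fB, P, hinj, hpath, hsymm, hbranch, hdisjP, hcover, hedge⟩ := h comp
  -- the n = 0 case
  rcases Nat.eq_zero_or_pos n with hn | hn
  · have hm0 : m = 0 := by omega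
    subst hm0
    rcases hcover ⟨c₀, hCsupp c₀ hc₀⟩ with ⟨w, _⟩ | ⟨a, _, _, _⟩
    · exact w.elim0
    · exact a.elim0
  -- extract, for each leaf, an edge from C lying on some subdivision path
  have key : ∀ i : Fin (n ^ 2), ∃ (c v : V) (hcm : c ∈ comp.supp) (hvm : v ∈ comp.supp)
      (a b : Fin m) (hab : H.Adj a b), c ∈ C ∧ v ∈ f (Sum.inr i) ∧
      s((⟨c, hcm⟩ : comp.supp), (⟨v, hvm⟩ : comp.supp)) ∈ (P hab).edges := by
    intro i
    obtain ⟨c, hc, v, hv, hcv⟩ := hfadj (Sum.inl 0) (Sum.inr i) (by simp)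
    have hcm := hCsupp c hc
    have hvm : v ∈ comp.supp := by
      rw [SimpleGraph.ConnectedComponent.mem_supp_iff] at hcm ⊢
      rw [← hcm]
      exact (SimpleGraph.ConnectedComponent.eq).mpr hcv.symm.reachable
    have hes : s((⟨c, hcm⟩ : comp.supp), (⟨v, hvm⟩ : comp.supp)) ∈
        (G.induce comp.supp).edgeSet := by
      rw [SimpleGraph.mem_edgeSet]
      exact hcv
    obtain ⟨a, b, hab, hmem⟩ := (hedge _).mp hes
    exact ⟨c, v, hcm, hvm, a, b, hab, hc, hv, hmem⟩
  choose cc vv hcm hvm aa bb hab hcC hvL hmem using key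
  -- vv i ∉ C and pairwise distinct
  have hvnC : ∀ i, vv i ∉ C := by
    intro i hvC
    exact Set.disjoint_left.mp (hfdisj (Sum.inl 0) (Sum.inr i) (by simp)) hvC (hvL i)
  have hvv_ne : ∀ i j, i ≠ j → vv i ≠ vv j := by
    intro i j hij heq
    exact Set.disjoint_left.mp (hfdisj (Sum.inr i) (Sum.inr j) (by simpa using hij))
      (hvL i) (heq ▸ hvL j)
  set F : Fin (n ^ 2) → Sym2 (Fin m) := fun i => s(aa i, bb i) with hF
  -- fibers of F have at most 2 elements
  have hfiber : ∀ e ∈ Finset.univ.image F,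
      (Finset.univ.filter (fun i => F i = e)).card ≤ 2 := by
    intro e _
    by_contra hcard
    push_neg at hcard
    obtain ⟨i, hi⟩ := Finset.card_pos.mp (show 0 < (Finset.univ.filter (fun i => F i = e)).card
      by omega)
    obtain ⟨j, hj⟩ := Finset.card_pos.mp (show 0 <
        ((Finset.univ.filter (fun i => F i = e)).erase i).card by
      rw [Finset.card_erase_of_mem hi]; omega)
    obtain ⟨k, hk⟩ := Finset.card_pos.mp (show 0 <
        (((Finset.univ.filter (fun i => F i = e)).erase i).erase j).card by
      rw [Finset.card_erase_of_mem hj, Finset.card_erase_of_mem hi]; omega)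
    have hji : j ≠ i := Finset.ne_of_mem_erase hj
    have hkj : k ≠ j := Finset.ne_of_mem_erase hk
    have hki : k ≠ i := Finset.ne_of_mem_erase (Finset.mem_of_mem_erase hk)
    have hFi : F i = e := (Finset.mem_filter.mp hi).2
    have hFj : F j = e := (Finset.mem_filter.mp (Finset.mem_of_mem_erase hj)).2
    have hFk : F k = e :=
      (Finset.mem_filter.mp (Finset.mem_of_mem_erase (Finset.mem_of_mem_erase hk))).2
    -- set up the mapped path in G
    set a₀ := aa i with ha₀
    set b₀ := bb i with hb₀
    set h₀ := hab i with hh₀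
    set ι : G.induce comp.supp →g G := (SimpleGraph.Embedding.induce comp.supp).toHom with hι
    set W : G.Walk ((fB a₀ : comp.supp) : V) ((fB b₀ : comp.supp) : V) :=
      (P h₀).map ι with hW
    have hWpath : W.IsPath := SimpleGraph.Walk.map_isPath_of_injective Subtype.val_injective
      (hpath h₀)
    -- transfer of edges between paths over the same H-edge
    have htrans : ∀ (a' b' : Fin m) (h' : H.Adj a' b'), s(a', b') = s(a₀, b₀) →
        ∀ x, x ∈ (P h').edges → x ∈ (P h₀).edges := by
      intro a' b' h' hsym x hx
      rcases Sym2.eq_iff.mp hsym with ⟨ha, hb⟩ | ⟨ha, hb⟩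
      · subst ha; subst hb; exact hx
      · subst ha; subst hb
        have hrev : P h' = (P h₀).reverse := hsymm h₀
        rw [hrev, SimpleGraph.Walk.edges_reverse, List.mem_reverse] at hx
        exact hx
    -- the crossing edges lie on W
    have hcrossmem : ∀ t : Fin (n ^ 2), F t = e → s(cc t, vv t) ∈ W.edges := by
      intro t hFt
      have h1 : s((⟨cc t, hcm t⟩ : comp.supp), (⟨vv t, hvm t⟩ : comp.supp)) ∈ (P h₀).edges :=
        htrans (aa t) (bb t) (hab t) (hFt.trans hFi.symm) _ (hmem t)
      rw [hW]; erw [SimpleGraph.Walk.edges_map]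
      refine List.mem_map.mpr ⟨_, h1, ?_⟩
      rfl
    -- interior vertices of W have all their G-edges on W
    have hintW : ∀ i', 0 < i' → i' < W.length → ∀ z, G.Adj (W.getVert i') z →
        s(W.getVert i', z) ∈ W.edges := by
      intro i' h0 hlen z hadj'
      have hmemsup : W.getVert i' ∈ W.support :=
        SimpleGraph.Walk.mem_support_iff_exists_getVert.mpr ⟨i', rfl, by omega⟩
      rw [hW] at hmemsup; erw [SimpleGraph.Walk.support_map] at hmemsup
      obtain ⟨x, hxsup, hxval⟩ := List.mem_map.mp hmemsup
      have hxval' : (x : V) = W.getVert i' := hxval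
      have hGadjxz : G.Adj (x : V) z := by rw [hxval']; exact hadj'
      have hzm : z ∈ comp.supp := by
        have hxm : (x : V) ∈ comp.supp := x.2
        rw [SimpleGraph.ConnectedComponent.mem_supp_iff] at hxm ⊢
        rw [← hxm]
        exact (SimpleGraph.ConnectedComponent.eq).mpr hGadjxz.symm.reachable
      have hΓadj : (G.induce comp.supp).Adj x ⟨z, hzm⟩ := hGadjxz
      have hesΓ : s(x, (⟨z, hzm⟩ : comp.supp)) ∈ (G.induce comp.supp).edgeSet := hΓadj
      obtain ⟨a', b', h', hm'⟩ := (hedge _).mp hesΓ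
      by_cases hcase : s(a', b') = s(a₀, b₀)
      · have h1 := htrans a' b' h' hcase _ hm'
        have : s((x : V), z) ∈ W.edges := by
          rw [hW]; erw [SimpleGraph.Walk.edges_map]
          exact List.mem_map.mpr ⟨_, h1, rfl⟩
        rwa [hxval'] at this
      · exfalso
        have hxsup' : x ∈ (P h').support :=
          SimpleGraph.Walk.fst_mem_support_of_mem_edges _ hm'
        have hbr := (hdisjP h₀ h' (fun hc => hcase hc.symm) x hxsup hxsup').1
        -- x is an endpoint, contradiction with interiority
        have hxa : (x : V) ≠ ((fB a₀ : comp.supp) : V) := by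
          intro hxeq
          have heq0 : W.getVert i' = W.getVert 0 := by
            rw [SimpleGraph.Walk.getVert_zero, ← hxval']
            exact hxeq
          have := getVert_inj' hWpath (by omega) (by omega) heq0
          omega
        have hxb : (x : V) ≠ ((fB b₀ : comp.supp) : V) := by
          intro hxeq
          have heqL : W.getVert i' = W.getVert W.length := by
            rw [SimpleGraph.Walk.getVert_length, ← hxval']
            exact hxeq
          have := getVert_inj' hWpath (by omega) (le_refl _) heqL
          omega
        rcases hbr with h1 | h1
        · exact hxa (by rw [h1])
        · exact hxb (by rw [h1])
    -- each of i, j, k gives a crossing index on W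
    have hcrossidx : ∀ t : Fin (n ^ 2), F t = e → ∃ idx, idx < W.length ∧
        s(cc t, vv t) = s(W.getVert idx, W.getVert (idx + 1)) ∧
        ((W.getVert idx ∈ C ∧ W.getVert (idx + 1) ∉ C) ∨
          (W.getVert idx ∉ C ∧ W.getVert (idx + 1) ∈ C)) := by
      intro t hFt
      obtain ⟨idx, hidx, heq⟩ := exists_getVert_of_mem_edges (hcrossmem t hFt)
      refine ⟨idx, hidx, heq, ?_⟩
      rcases Sym2.eq_iff.mp heq with ⟨h1, h2⟩ | ⟨h1, h2⟩
      · exact Or.inl ⟨h1 ▸ hcC t, h2 ▸ hvnC t⟩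
      · exact Or.inr ⟨h2 ▸ hvnC t, h1 ▸ hcC t⟩
    obtain ⟨idxi, hidxi, heqi, hCi⟩ := hcrossidx i hFi
    obtain ⟨idxj, hidxj, heqj, hCj⟩ := hcrossidx j hFj
    obtain ⟨idxk, hidxk, heqk, hCk⟩ := hcrossidx k hFk
    -- the three indices are distinct
    have hedge_ne : ∀ t t' : Fin (n ^ 2), t ≠ t' → s(cc t, vv t) ≠ s(cc t', vv t') := by
      intro t t' htt' heq
      rcases Sym2.eq_iff.mp heq with ⟨h1, h2⟩ | ⟨h1, h2⟩
      · exact hvv_ne t t' htt' h2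
      · exact hvnC t' (by rw [← h1]; exact hcC t)
    have hidx_ne : ∀ (t t' : Fin (n ^ 2)) idx idx', t ≠ t' →
        s(cc t, vv t) = s(W.getVert idx, W.getVert (idx + 1)) →
        s(cc t', vv t') = s(W.getVert idx', W.getVert (idx' + 1)) →
        idx ≠ idx' := by
      intro t t' idx idx' htt' h1 h2 hii
      subst hii
      exact hedge_ne t t' htt' (h1.trans h2.symm)
    have hij' : idxi ≠ idxj := hidx_ne i j idxi idxj (Ne.symm hji) heqi heqj
    have hik' : idxi ≠ idxk := hidx_ne i k idxi idxk (Ne.symm hki) heqi heqk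
    have hjk' : idxj ≠ idxk := hidx_ne j k idxj idxk (Ne.symm hkj) heqj heqk
    -- sort and apply the core lemma
    obtain ⟨u', v', w', huv', hvw', hu', hv', hw'⟩ := sort3 hij' hik' hjk'
      (fun idx => idx < W.length ∧
        ((W.getVert idx ∈ C ∧ W.getVert (idx + 1) ∉ C) ∨
          (W.getVert idx ∉ C ∧ W.getVert (idx + 1) ∈ C)))
      ⟨hidxi, hCi⟩ ⟨hidxj, hCj⟩ ⟨hidxk, hCk⟩
    exact core W hWpath C hwalk hintW u' v' w' huv' hvw' hw'.1 hu'.2 hv'.2 hw'.2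
  -- counting
  have hcount : Fintype.card (Fin (n ^ 2)) ≤ 2 * (Finset.univ.image F).card := by
    simpa using Finset.card_le_mul_card_image (f := F) Finset.univ 2 hfiber
  have himg : Finset.univ.image F ⊆ H.edgeFinset := by
    intro e he
    obtain ⟨i, _, rfl⟩ := Finset.mem_image.mp he
    rw [SimpleGraph.mem_edgeFinset]
    exact hab i
  have hchoose : H.edgeFinset.card ≤ m.choose 2 := by
    simpa using SimpleGraph.card_edgeFinset_le_card_choose_two (G := H)
  have h2 : 2 * m.choose 2 ≤ m * (m - 1) := by
    rw [Nat.choose_two_right]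
    omega
  have hmono : m * (m - 1) ≤ n * (n - 1) := by
    exact Nat.mul_le_mul hm (by omega)
  have hcard := Finset.card_le_card himg
  simp only [Fintype.card_fin] at hcount
  have : n ^ 2 ≤ n * (n - 1) := by
    calc n ^ 2 ≤ 2 * (Finset.univ.image F).card := hcount
    _ ≤ 2 * H.edgeFinset.card := by omega
    _ ≤ 2 * m.choose 2 := by omega
    _ ≤ m * (m - 1) := h2
    _ ≤ n * (n - 1) := hmono
  obtain ⟨k, rfl⟩ : ∃ k, n = k + 1 := ⟨n - 1, by omega⟩
  have hs : (k + 1) - 1 = k := rfl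
  rw [hs] at this
  nlinarith [this]
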